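/- Fix 0 ≤ s < T. Suppose the law of X_T under ℙ has density f : G → [0,∞) with respect to Vol, i.e. Measure.map X_T ℙ = Vol.withDensity f. Let ξ : Ω → [0,∞) be a bounded F_s-measurable random variable, and let φ : G → ℝ be any measurable function such that φ ∘ X_T is a version of the conditional expectation E[ξ | σ(X_T)]. Then for Vol-almost every v ∈ G, φ(v) · f(v) = E[ξ · p_{T−s}(X_s, v)]. In particular, on the set where f(v) > 0, the conditional expectation of ξ given X_T = v equals E[ξ · p_{T−s}(X_s, v)] / f(v) for Vol-almost every v. -/
import Mathlib


open MeasureTheory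
open scoped ENNReal NNReal

/-- Fix `0 ≤ s < T`.  Suppose the law of `X_T` under `ℙ` has density `f ≥ 0` with
respect to `Vol`, `ξ : Ω → [0,∞)` is a bounded `ℱ_s`-measurable random variable, and
`φ ∘ X_T` is a version of the conditional expectation `E[ξ | σ(X_T)]`.  Then for
`Vol`-a.e. `v`, `φ(v) · f(v) = E[ξ · p_{T-s}(X_s, v)]`; in particular, where `f(v) > 0`
the conditional expectation of `ξ` given `X_T = v` equals
`E[ξ · p_{T-s}(X_s, v)] / f(v)` for `Vol`-a.e. `v`. -/
theorem conditional_expectation_given_endpoint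
    {G : Type*} [MeasurableSpace G] (Vol : Measure G) [SigmaFinite Vol]
    {Ω : Type*} {mΩ : MeasurableSpace Ω} (P : Measure Ω) [IsProbabilityMeasure P]
    (ℱ : Filtration ℝ mΩ)
    (p : ℝ → G → G → ℝ)
    (hp_meas : Measurable fun q : ℝ × G × G => p q.1 q.2.1 q.2.2)
    (hp_nonneg : ∀ t x y, 0 < t → 0 ≤ p t x y)
    (hp_symm : ∀ t x y, 0 < t → p t x y = p t y x)
    (hp_ck : ∀ s t : ℝ, 0 < s → 0 < t → ∀ x y,
      p (t + s) x y = ∫ z, p t x z * p s z y ∂Vol)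
    (hp_norm : ∀ t x, 0 < t → ∫ y, p t x y ∂Vol = 1)
    (X : ℝ → Ω → G)
    (hX_adapted : ∀ t : ℝ, 0 ≤ t → Measurable[ℱ t] (X t))
    (x₀ : G) (hX0 : ∀ᵐ ω ∂P, X 0 ω = x₀)
    (hMarkov : ∀ s t : ℝ, 0 ≤ s → s < t → ∀ f : G → ℝ, Measurable f →
      (∃ C, ∀ y, |f y| ≤ C) →
      P[(fun ω => f (X t ω)) | ℱ s] =ᵐ[P] fun ω => ∫ z, f z * p (t - s) (X s ω) z ∂Vol)
    (T : ℝ) (hT : 0 < T)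
    (s : ℝ) (hs : 0 ≤ s) (hsT : s < T)
    -- the law of `X_T` has density `f : G → [0, ∞)` with respect to `Vol` :
    (f : G → ℝ) (hf_meas : Measurable f) (hf_nonneg : ∀ v, 0 ≤ f v)
    (hf_law : Measure.map (X T) P = Vol.withDensity fun v => ENNReal.ofReal (f v))
    -- a bounded nonnegative `ℱ_s`-measurable random variable :
    (ξ : Ω → ℝ) (hξ_meas : Measurable[ℱ s] ξ) (hξ_nonneg : ∀ ω, 0 ≤ ξ ω)
    (hξ_bdd : ∃ C, ∀ ω, |ξ ω| ≤ C)
    -- `φ ∘ X_T` is a version of the conditional expectation `E[ξ | σ(X_T)]` :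
    (φ : G → ℝ) (hφ_meas : Measurable φ)
    (hφ : P[ξ | MeasurableSpace.comap (X T) inferInstance]
      =ᵐ[P] fun ω => φ (X T ω)) :
    (∀ᵐ v ∂Vol, φ v * f v = ∫ ω, ξ ω * p (T - s) (X s ω) v ∂P) ∧
    (∀ᵐ v ∂Vol, 0 < f v → φ v = (∫ ω, ξ ω * p (T - s) (X s ω) v ∂P) / f v) := by
  obtain ⟨C, hC⟩ := hξ_bdd
  have ht : 0 < T - s := sub_pos.2 hsT
  have hXs : Measurable (X s) := (hX_adapted s hs).mono (ℱ.le s) le_rfl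
  have hXT : Measurable (X T) := (hX_adapted T hT.le).mono (ℱ.le T) le_rfl
  have hξm : Measurable ξ := hξ_meas.mono (ℱ.le s) le_rfl
  have hξ_int : Integrable ξ P :=
    (integrable_const C).mono' hξm.aestronglyMeasurable
      (Filter.Eventually.of_forall fun ω => by simpa using hC ω)
  -- measurability of the kernel as a function on the product space
  have hpm : Measurable fun q : Ω × G => p (T - s) (X s q.1) q.2 :=
    hp_meas.comp (measurable_const.prodMk ((hXs.comp measurable_fst).prodMk measurable_snd))
  have hFm : Measurable fun q : Ω × G => ξ q.1 * p (T - s) (X s q.1) q.2 :=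
    (hξm.comp measurable_fst).mul hpm
  -- the kernel is integrable in its second variable
  have hp_int : ∀ x, Integrable (fun y => p (T - s) x y) Vol := by
    intro x
    by_contra h
    have h1 := hp_norm (T - s) x ht
    rw [integral_undef h] at h1
    norm_num at h1
  have hp_set_le : ∀ (x) (A : Set G), ∫ v in A, p (T - s) x v ∂Vol ≤ 1 := by
    intro x A
    calc ∫ v in A, p (T - s) x v ∂Vol ≤ ∫ v, p (T - s) x v ∂Vol :=
          setIntegral_le_integral (hp_int x)
            (Filter.Eventually.of_forall fun v => hp_nonneg (T - s) x v ht)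
      _ = 1 := hp_norm (T - s) x ht
  -- integrability on products
  have hF_int : ∀ A : Set G, MeasurableSet A →
      Integrable (fun q : Ω × G => ξ q.1 * p (T - s) (X s q.1) q.2)
        (P.prod (Vol.restrict A)) := by
    intro A hA
    rw [integrable_prod_iff hFm.aestronglyMeasurable]
    constructor
    · exact Filter.Eventually.of_forall fun ω =>
        ((hp_int (X s ω)).integrableOn.const_mul (ξ ω))
    · refine (integrable_const C).mono'
        ((hFm.norm.stronglyMeasurable.integral_prod_right'
          (ν := Vol.restrict A)).aestronglyMeasurable) ?_
      refine Filter.Eventually.of_forall fun ω => ?_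
      have h0 : 0 ≤ ∫ v in A, ‖ξ ω * p (T - s) (X s ω) v‖ ∂Vol :=
        integral_nonneg fun v => norm_nonneg _
      rw [Real.norm_of_nonneg h0]
      have heq : ∫ v in A, ‖ξ ω * p (T - s) (X s ω) v‖ ∂Vol
          = ξ ω * ∫ v in A, p (T - s) (X s ω) v ∂Vol := by
        rw [← integral_const_mul]
        refine integral_congr_ae (Filter.Eventually.of_forall fun v => ?_)
        show ‖ξ ω * p (T - s) (X s ω) v‖ = ξ ω * p (T - s) (X s ω) v
        rw [Real.norm_of_nonneg (mul_nonneg (hξ_nonneg ω) (hp_nonneg _ _ _ ht))]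
      rw [heq]
      calc ξ ω * ∫ v in A, p (T - s) (X s ω) v ∂Vol
          ≤ ξ ω * 1 := by
            exact mul_le_mul_of_nonneg_left (hp_set_le (X s ω) A) (hξ_nonneg ω)
        _ = ξ ω := mul_one _
        _ ≤ C := (abs_le.1 (hC ω)).2
  -- the key set-integral identity
  have key : ∀ A : Set G, MeasurableSet A →
      ∫ v in A, φ v * f v ∂Vol = ∫ v in A, (∫ ω, ξ ω * p (T - s) (X s ω) v ∂P) ∂Vol := by
    intro A hA
    set indA : G → ℝ := A.indicator fun _ => 1 with hindA
    have hindA_meas : Measurable indA := measurable_const.indicator hA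
    have hindA_bdd : ∀ y, |indA y| ≤ 1 := by
      intro y; by_cases h : y ∈ A <;> simp [hindA, h]
    have h_ind_int : Integrable (fun ω => indA (X T ω)) P :=
      (integrable_const 1).mono' ((hindA_meas.comp hXT).aestronglyMeasurable)
        (Filter.Eventually.of_forall fun ω => by simpa using hindA_bdd (X T ω))
    have h_mul_int : Integrable (ξ * fun ω => indA (X T ω)) P := by
      refine (integrable_const (C * 1)).mono'
        ((hξm.mul (hindA_meas.comp hXT)).aestronglyMeasurable) ?_
      refine Filter.Eventually.of_forall fun ω => ?_
      simp only [Pi.mul_apply, norm_mul, Real.norm_eq_abs]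
      exact mul_le_mul (hC ω) (hindA_bdd (X T ω)) (abs_nonneg _) ((abs_nonneg _).trans (hC ω))
    have hMk := hMarkov s T hs hsT indA hindA_meas ⟨1, hindA_bdd⟩
    have hcomap : MeasurableSpace.comap (X T) inferInstance ≤ mΩ := hXT.comap_le
    calc ∫ v in A, φ v * f v ∂Vol
        = ∫ v in A, φ v ∂(Measure.map (X T) P) := by
          rw [hf_law, restrict_withDensity hA,
            show (fun v => ENNReal.ofReal (f v)) = (fun v => ((f v).toNNReal : ℝ≥0∞)) from rfl,
            integral_withDensity_eq_integral_smul hf_meas.real_toNNReal φ]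
          refine integral_congr_ae (Filter.Eventually.of_forall fun v => ?_)
          simp [NNReal.smul_def, Real.coe_toNNReal _ (hf_nonneg v), mul_comm]
      _ = ∫ ω in X T ⁻¹' A, φ (X T ω) ∂P :=
          setIntegral_map hA hφ_meas.aestronglyMeasurable hXT.aemeasurable
      _ = ∫ ω in X T ⁻¹' A, (P[ξ | MeasurableSpace.comap (X T) inferInstance]) ω ∂P :=
          setIntegral_congr_ae (hXT hA) (hφ.symm.mono fun ω h _ => h)
      _ = ∫ ω in X T ⁻¹' A, ξ ω ∂P :=
          setIntegral_condExp hcomap hξ_int ⟨A, hA, rfl⟩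
      _ = ∫ ω, (ξ * fun ω => indA (X T ω)) ω ∂P := by
          rw [← integral_indicator (hXT hA)]
          refine integral_congr_ae (Filter.Eventually.of_forall fun ω => ?_)
          by_cases h : X T ω ∈ A
          · simp [hindA, Set.indicator_of_mem, h, Set.mem_preimage]
          · simp [hindA, Set.indicator_of_notMem, h, Set.mem_preimage]
      _ = ∫ ω, (P[(ξ * fun ω => indA (X T ω)) | ℱ s]) ω ∂P :=
          (integral_condExp (ℱ.le s)).symm
      _ = ∫ ω, ξ ω * (P[(fun ω => indA (X T ω)) | ℱ s]) ω ∂P :=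
          integral_congr_ae
            ((condExp_mul_of_stronglyMeasurable_left hξ_meas.stronglyMeasurable
              h_mul_int h_ind_int).mono fun ω h => by simpa using h)
      _ = ∫ ω, ξ ω * (∫ z, indA z * p (T - s) (X s ω) z ∂Vol) ∂P :=
          integral_congr_ae (hMk.mono fun ω h => by dsimp only at h ⊢; rw [h])
      _ = ∫ ω, ∫ v in A, ξ ω * p (T - s) (X s ω) v ∂Vol ∂P := by
          refine integral_congr_ae (Filter.Eventually.of_forall fun ω => ?_)
          dsimp only
          rw [← integral_indicator hA, ← integral_const_mul]
          refine integral_congr_ae (Filter.Eventually.of_forall fun z => ?_)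
          dsimp only
          by_cases h : z ∈ A
          · simp [hindA, Set.indicator_of_mem, h]
          · simp [hindA, Set.indicator_of_notMem, h]
      _ = ∫ v in A, (∫ ω, ξ ω * p (T - s) (X s ω) v ∂P) ∂Vol :=
          integral_integral_swap (hF_int A hA)
  -- integrability of `φ * f` with respect to `Vol`
  have hφf_int : Integrable (fun v => φ v * f v) Vol := by
    set R : ℝ≥0 := ⟨max C 0, le_max_right C 0⟩ with hR
    have hbdd : ∀ᵐ ω ∂P, |ξ ω| ≤ (R : ℝ) :=
      Filter.Eventually.of_forall fun ω => (hC ω).trans (le_max_left _ _)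
    have hcond := ae_bdd_condExp_of_ae_bdd
      (m := MeasurableSpace.comap (X T) inferInstance) hbdd
    have hφXT : ∀ᵐ ω ∂P, |φ (X T ω)| ≤ (R : ℝ) := by
      filter_upwards [hcond, hφ] with ω h1 h2
      rw [← h2]; exact h1
    have hφXT_int : Integrable (fun ω => φ (X T ω)) P :=
      (integrable_const (R : ℝ)).mono' ((hφ_meas.comp hXT).aestronglyMeasurable)
        (hφXT.mono fun ω h => by simpa using h)
    have hφ_map : Integrable φ (Measure.map (X T) P) := by
      rw [integrable_map_measure hφ_meas.aestronglyMeasurable hXT.aemeasurable]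
      exact hφXT_int
    rw [hf_law, integrable_withDensity_iff (hf_meas.ennreal_ofReal)
      (Filter.Eventually.of_forall fun v => ENNReal.ofReal_lt_top)] at hφ_map
    refine hφ_map.congr (Filter.Eventually.of_forall fun v => ?_)
    dsimp only
    rw [ENNReal.toReal_ofReal (hf_nonneg v)]
  -- conclude by the a.e. uniqueness of densities
  have h1 : (fun v => φ v * f v) =ᵐ[Vol]
      fun v => ∫ ω, ξ ω * p (T - s) (X s ω) v ∂P := by
    refine ae_eq_of_forall_setIntegral_eq_of_sigmaFinite
      (fun A hA _ => hφf_int.integrableOn)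
      (fun A hA _ => (hF_int A hA).integral_prod_right)
      (fun A hA _ => key A hA)
  refine ⟨h1, ?_⟩
  filter_upwards [h1] with v hv hfv
  rw [eq_div_iff hfv.ne']
  exact hv
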